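/- Suppose the symmetric 3-tensor T satisfies condition (Γ). Let S² be the p×p matrix with entries (S²)_{i,i'} = 2⟨T_i, T_{i'}⟩. Then S² ≤ 2τ² tr(Γ⁴) Γ² in the sense of quadratic forms, i.e. uᵀ S² u ≤ 2τ² tr(Γ⁴) ‖Γu‖² for all u ∈ ℝ^p. -/

import Mathlib

open Matrix Finset

/-- Euclidean norm on `ℝ^p`. -/
noncomputable def euclNorm {p : ℕ} (v : Fin p → ℝ) : ℝ := Real.sqrt (∑ i, v i ^ 2)


private lemma aux_comb (p0 p1 p2 F0 F1 F2 K : ℝ)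
    (b0 : |F0| ≤ K) (b1 : |F1| ≤ K) (b2 : |F2| ≤ K)
    (hp0n : 0 ≤ p0) (hp1n : 0 ≤ p1) (hp2n : 0 ≤ p2)
    (hsum : p0 + p1 + p2 = 9) :
    p0 * F0 - p1 * F1 + p2 * F2 ≤ 9 * K := by
  have e0 : p0 * F0 ≤ p0 * K := mul_le_mul_of_nonneg_left (le_trans (le_abs_self _) b0) hp0n
  have h1 : p1 * (-F1) ≤ p1 * K :=
    mul_le_mul_of_nonneg_left (le_trans (neg_le_abs _) b1) hp1n
  have e1 : -(p1 * F1) ≤ p1 * K := by rw [← mul_neg]; exact h1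
  have e2 : p2 * F2 ≤ p2 * K := mul_le_mul_of_nonneg_left (le_trans (le_abs_self _) b2) hp2n
  have hsK : p0 * K + p1 * K + p2 * K = 9 * K := by linear_combination K * hsum
  linarith [e0, e1, e2]

private lemma aux_final (P Q K m : ℝ) (main2 : 3 * (9 * P ^ 2 + Q ^ 2) ≤ 9 * K * m)
    (habs_sq : m ^ 2 = 9 * P ^ 2 + Q ^ 2) (hm : 0 ≤ m) (hK : 0 ≤ K) :
    9 * P ^ 2 + Q ^ 2 ≤ 9 * K ^ 2 := by
  nlinarith [main2, habs_sq, hm, hK, sq_nonneg (3 * K - m)]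

private lemma aux_mul (X m K c3 s3 P Q : ℝ) (hmain : X ≤ 9 * K)
    (hX : X = 3 * (3 * P * c3 + Q * s3)) (hm : 0 ≤ m)
    (hcos : m * c3 = 3 * P) (hsin : m * s3 = Q) :
    3 * (9 * P ^ 2 + Q ^ 2) ≤ 9 * K * m := by
  have hmul : m * X ≤ m * (9 * K) := mul_le_mul_of_nonneg_left hmain hm
  have heq : m * X = 3 * (9 * P ^ 2 + Q ^ 2) := by
    rw [hX]; linear_combination (9 * P) * hcos + (3 * Q) * hsin
  calc 3 * (9 * P ^ 2 + Q ^ 2) = m * X := heq.symm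
    _ ≤ m * (9 * K) := hmul
    _ = 9 * K * m := mul_comm _ _

/-- Core "Banach / ellipse" lemma for cubic trigonometric polynomials. -/
lemma core_trig (P Q R W K : ℝ)
    (h : ∀ θ : ℝ, |P * Real.cos θ ^ 3 + Q * Real.cos θ ^ 2 * Real.sin θ
        + R * Real.cos θ * Real.sin θ ^ 2 + W * Real.sin θ ^ 3| ≤ K) :
    9 * P ^ 2 + Q ^ 2 ≤ 9 * K ^ 2 := by
  have hK : 0 ≤ K := le_trans (abs_nonneg _) (h 0)
  set z : ℂ := ⟨3 * P, Q⟩ with hz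
  set φ : ℝ := z.arg / 3 with hφ
  set c : ℝ := Real.cos φ with hc
  set s : ℝ := Real.sin φ with hs
  set r : ℝ := Real.sqrt 3 with hrdef
  have hcs : c ^ 2 + s ^ 2 = 1 := by
    rw [hc, hs]; exact Real.cos_sq_add_sin_sq φ
  have hr : r ^ 2 = 3 := Real.sq_sqrt (by norm_num)
  have hc1 : Real.cos (φ + Real.pi / 3) = c / 2 - r * s / 2 := by
    rw [Real.cos_add, Real.cos_pi_div_three, Real.sin_pi_div_three, hc, hs, hrdef]; ring
  have hs1 : Real.sin (φ + Real.pi / 3) = s / 2 + r * c / 2 := by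
    rw [Real.sin_add, Real.cos_pi_div_three, Real.sin_pi_div_three, hc, hs, hrdef]; ring
  have hc2 : Real.cos (φ + Real.pi / 3 + Real.pi / 3) = -c / 2 - r * s / 2 := by
    rw [Real.cos_add, Real.cos_pi_div_three, Real.sin_pi_div_three, hc1, hs1]
    linear_combination (-(c/4)) * hr
  have hs2 : Real.sin (φ + Real.pi / 3 + Real.pi / 3) = -s / 2 + r * c / 2 := by
    rw [Real.sin_add, Real.cos_pi_div_three, Real.sin_pi_div_three, hc1, hs1]
    linear_combination (-(s/4)) * hr
  have hcos3 : Real.cos (3 * φ) = 4 * c ^ 3 - 3 * c := by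
    rw [Real.cos_three_mul, hc]
  have hsin3 : Real.sin (3 * φ) = 3 * s - 4 * s ^ 3 := by
    rw [Real.sin_three_mul, hs]
  obtain ⟨p0, hp0⟩ : ∃ x : ℝ, x = (2 * (c ^ 2 - s ^ 2) + 1) ^ 2 := ⟨_, rfl⟩
  obtain ⟨p1, hp1⟩ : ∃ x : ℝ, x = (1 - (c ^ 2 - s ^ 2) - 2 * r * c * s) ^ 2 := ⟨_, rfl⟩
  obtain ⟨p2, hp2⟩ : ∃ x : ℝ, x = (1 - (c ^ 2 - s ^ 2) + 2 * r * c * s) ^ 2 := ⟨_, rfl⟩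
  obtain ⟨F0, hF0⟩ : ∃ x : ℝ,
      x = P * c ^ 3 + Q * c ^ 2 * s + R * c * s ^ 2 + W * s ^ 3 := ⟨_, rfl⟩
  obtain ⟨F1, hF1⟩ : ∃ x : ℝ, x = P * (c / 2 - r * s / 2) ^ 3
      + Q * (c / 2 - r * s / 2) ^ 2 * (s / 2 + r * c / 2)
      + R * (c / 2 - r * s / 2) * (s / 2 + r * c / 2) ^ 2
      + W * (s / 2 + r * c / 2) ^ 3 := ⟨_, rfl⟩
  obtain ⟨F2, hF2⟩ : ∃ x : ℝ, x = P * (-c / 2 - r * s / 2) ^ 3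
      + Q * (-c / 2 - r * s / 2) ^ 2 * (-s / 2 + r * c / 2)
      + R * (-c / 2 - r * s / 2) * (-s / 2 + r * c / 2) ^ 2
      + W * (-s / 2 + r * c / 2) ^ 3 := ⟨_, rfl⟩
  have key : p0 * F0 - p1 * F1 + p2 * F2
      = 3 * (3 * P * (4 * c ^ 3 - 3 * c) + Q * (3 * s - 4 * s ^ 3)) := by
    rw [hp0, hp1, hp2, hF0, hF1, hF2]
    linear_combination ((9)*s*Q + (-3/4)*s^3*W + (-9/4)*s^3*Q + (15/4)*s^5*W + (-3/4)*s^5*Q + (-27)*c*P + (-9/4)*c*s^2*R + (-99/4)*c*s^2*P + (9/4)*c*s^4*R + (-45/4)*c*s^4*P + (9/4)*c^2*s*W + (27/4)*c^2*s*Q + (-15/2)*c^2*s^3*W + (3/2)*c^2*s^3*Q + (3/4)*c^3*R + (33/4)*c^3*P + (3/2)*c^3*s^2*R + (-15/2)*c^3*s^2*P + (-45/4)*c^4*s*W + (9/4)*c^4*s*Q + (-3/4)*c^5*R + (15/4)*c^5*P) * hcs + ((-1/4)*s^3*Q + (-1/2)*s^5*Q + (-1/4)*s^7*Q + (1/2)*c*s^2*R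 + (-3/4)*c*s^2*P + (-9/2)*c*s^4*P + (-1)*c*s^4*r^2*P + (-1/2)*c*s^6*R + (-15/4)*c*s^6*P + (-1)*c*s^6*r^2*P + (-3/4)*c^2*s*W + (1/2)*c^2*s*Q + (3/2)*c^2*s^3*W + (5/2)*c^2*s^3*Q + (1)*c^2*s^3*r^2*Q + (5/4)*c^2*s^5*W + (-1)*c^2*s^5*Q + (-1/4)*c^3*R + (-5/2)*c^3*s^2*R + (-3/2)*c^3*s^2*P + (-1)*c^3*s^2*r^2*R + (15/4)*c^3*s^4*R + (-15/2)*c^3*s^4*P + (1)*c^3*s^4*r^2*R + (-2)*c^3*s^4*r^2*P + (9/2)*c^4*s*W + (1)*c^4*s*r^2*W + (-15/2)*c^4*s^3*W + (15/4)*c^4*s^3*Q + (-2)*c^4*s^3*r^2*W + (1)*c^4*s^3*r^2*Q + (1/2)*c^5*R + (-1)*c^5*s^2*R + (5/4)*c^5*s^2*P + (-15/4)*c^6*s*W + (-1/2)*c^6*s*Q + (-1)*c^6*s*r^2*W + (-1/4)*c^7*R) * hr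
  have hsum : p0 + p1 + p2 = 9 := by
    rw [hp0, hp1, hp2]
    linear_combination ((6) + (6)*s^2 + (6)*c^2) * hcs + ((8)*c^2*s^2) * hr
  have b0 : |F0| ≤ K := by
    have := h φ; rw [← hc, ← hs, ← hF0] at this; exact this
  have b1 : |F1| ≤ K := by
    have := h (φ + Real.pi / 3); rw [hc1, hs1, ← hF1] at this; exact this
  have b2 : |F2| ≤ K := by
    have := h (φ + Real.pi / 3 + Real.pi / 3); rw [hc2, hs2, ← hF2] at this; exact this
  have hp0n : 0 ≤ p0 := by rw [hp0]; positivity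
  have hp1n : 0 ≤ p1 := by rw [hp1]; positivity
  have hp2n : 0 ≤ p2 := by rw [hp2]; positivity
  have main : 3 * (3 * P * (4 * c ^ 3 - 3 * c) + Q * (3 * s - 4 * s ^ 3)) ≤ 9 * K := by
    rw [← key]
    exact aux_comb p0 p1 p2 F0 F1 F2 K b0 b1 b2 hp0n hp1n hp2n hsum
  have habs_cos : ‖z‖ * (4 * c ^ 3 - 3 * c) = 3 * P := by
    rw [← hcos3, hφ, show 3 * (z.arg / 3) = z.arg by ring, Complex.norm_mul_cos_arg]
  have habs_sin : ‖z‖ * (3 * s - 4 * s ^ 3) = Q := by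
    rw [← hsin3, hφ, show 3 * (z.arg / 3) = z.arg by ring, Complex.norm_mul_sin_arg]
  have habs_sq : ‖z‖ ^ 2 = 9 * P ^ 2 + Q ^ 2 := by
    rw [Complex.sq_norm, hz, Complex.normSq_mk]; ring
  have habs_nonneg : 0 ≤ ‖z‖ := norm_nonneg z
  exact aux_final P Q K (‖z‖)
    (aux_mul _ (‖z‖) K (4 * c ^ 3 - 3 * c) (3 * s - 4 * s ^ 3) P Q main rfl
      habs_nonneg habs_cos habs_sin)
    habs_sq habs_nonneg hK



/-- Trilinear form associated to a 3-tensor. -/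
def S3 {p : ℕ} (T : Fin p → Fin p → Fin p → ℝ) (a b c : Fin p → ℝ) : ℝ :=
  ∑ i, ∑ j, ∑ k, T i j k * a i * b j * c k

section S3lemmas
variable {p : ℕ} (T : Fin p → Fin p → Fin p → ℝ)

lemma S3_swap12 (hsym : ∀ i j k, T i j k = T j i k ∧ T i j k = T i k j)
    (a b c : Fin p → ℝ) : S3 T a b c = S3 T b a c := by
  unfold S3
  rw [Finset.sum_comm]
  refine Finset.sum_congr rfl fun x _ => ?_
  refine Finset.sum_congr rfl fun y _ => ?_
  refine Finset.sum_congr rfl fun k _ => ?_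
  rw [(hsym y x k).1]; ring

lemma S3_swap23 (hsym : ∀ i j k, T i j k = T j i k ∧ T i j k = T i k j)
    (a b c : Fin p → ℝ) : S3 T a b c = S3 T a c b := by
  unfold S3
  refine Finset.sum_congr rfl fun i _ => ?_
  rw [Finset.sum_comm]
  refine Finset.sum_congr rfl fun x _ => ?_
  refine Finset.sum_congr rfl fun y _ => ?_
  rw [(hsym i y x).2]; ring

lemma S3_first (x y : ℝ) (w z b d : Fin p → ℝ) :
    S3 T (fun i => x * w i + y * z i) b d = x * S3 T w b d + y * S3 T z b d := by
  unfold S3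
  have e : ∀ i j k, T i j k * (x * w i + y * z i) * b j * d k
      = x * (T i j k * w i * b j * d k) + y * (T i j k * z i * b j * d k) := by
    intro i j k; ring
  simp only [e, Finset.sum_add_distrib, ← Finset.mul_sum]

lemma S3_cube_expand (hsym : ∀ i j k, T i j k = T j i k ∧ T i j k = T i k j)
    (u v : Fin p → ℝ) (x y : ℝ) :
    S3 T (fun i => x * v i + y * u i) (fun i => x * v i + y * u i)
        (fun i => x * v i + y * u i)
      = x ^ 3 * S3 T v v v + 3 * x ^ 2 * y * S3 T u v v
        + 3 * x * y ^ 2 * S3 T u u v + y ^ 3 * S3 T u u u := by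
  unfold S3
  have e : ∀ i j k, T i j k * (x * v i + y * u i) * (x * v j + y * u j) * (x * v k + y * u k)
      = x ^ 3 * (T i j k * v i * v j * v k)
      + x ^ 2 * y * (T i j k * u i * v j * v k)
      + x ^ 2 * y * (T i j k * v i * u j * v k)
      + x ^ 2 * y * (T i j k * v i * v j * u k)
      + x * y ^ 2 * (T i j k * u i * u j * v k)
      + x * y ^ 2 * (T i j k * u i * v j * u k)
      + x * y ^ 2 * (T i j k * v i * u j * u k)
      + y ^ 3 * (T i j k * u i * u j * u k) := by intro i j k; ring
  simp only [e, Finset.sum_add_distrib, ← Finset.mul_sum]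
  have h1 : (∑ i, ∑ j, ∑ k, T i j k * v i * u j * v k)
      = ∑ i, ∑ j, ∑ k, T i j k * u i * v j * v k := S3_swap12 T hsym v u v
  have h2 : (∑ i, ∑ j, ∑ k, T i j k * v i * v j * u k)
      = ∑ i, ∑ j, ∑ k, T i j k * u i * v j * v k := by
    rw [show (∑ i, ∑ j, ∑ k, T i j k * v i * v j * u k) = S3 T v v u from rfl,
      S3_swap23 T hsym, S3_swap12 T hsym]; rfl
  have h3 : (∑ i, ∑ j, ∑ k, T i j k * u i * v j * u k)
      = ∑ i, ∑ j, ∑ k, T i j k * u i * u j * v k := S3_swap23 T hsym u v u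
  have h4 : (∑ i, ∑ j, ∑ k, T i j k * v i * u j * u k)
      = ∑ i, ∑ j, ∑ k, T i j k * u i * u j * v k := by
    rw [show (∑ i, ∑ j, ∑ k, T i j k * v i * u j * u k) = S3 T v u u from rfl,
      S3_swap12 T hsym, S3_swap23 T hsym]; rfl
  rw [h1, h2, h3, h4]; ring

end S3lemmas

section mulVecLemmas
variable {p : ℕ} (Γ : Matrix (Fin p) (Fin p) ℝ)

lemma mulVec_two (x y : ℝ) (w z : Fin p → ℝ) :
    Γ.mulVec (fun i => x * w i + y * z i) = fun i => x * Γ.mulVec w i + y * Γ.mulVec z i := by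
  funext i
  simp only [Matrix.mulVec, dotProduct]
  rw [Finset.mul_sum, Finset.mul_sum, ← Finset.sum_add_distrib]
  exact Finset.sum_congr rfl fun j _ => by ring

lemma sumsq_two (x y : ℝ) (Vv Uu : Fin p → ℝ) :
    (∑ i, (x * Vv i + y * Uu i) ^ 2)
      = x ^ 2 * (∑ i, Vv i ^ 2) + 2 * x * y * (∑ i, Vv i * Uu i)
        + y ^ 2 * (∑ i, Uu i ^ 2) := by
  have e : ∀ i : Fin p, (x * Vv i + y * Uu i) ^ 2
      = x ^ 2 * Vv i ^ 2 + 2 * x * y * (Vv i * Uu i) + y ^ 2 * Uu i ^ 2 := by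
    intro i; ring
  simp only [e, Finset.sum_add_distrib, ← Finset.mul_sum]

end mulVecLemmas


/-- A cubic polynomial bounded by a constant has vanishing linear coefficient. -/
lemma cubic_bounded_const (k0 k1 k2 k3 C : ℝ)
    (h : ∀ t : ℝ, |k0 + k1 * t + k2 * t ^ 2 + k3 * t ^ 3| ≤ C) : k1 = 0 := by
  have key : ∀ L : ℝ, |12 * (k1 * L)| ≤ 18 * C := by
    intro L
    have h1 := abs_le.mp (h L)
    have h2 := abs_le.mp (h (-L))
    have h3 := abs_le.mp (h (2 * L))
    have h4 := abs_le.mp (h (-(2 * L)))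
    rw [abs_le]
    constructor <;> nlinarith [h1.1, h1.2, h2.1, h2.2, h3.1, h3.2, h4.1, h4.2]
  by_contra hk
  have hC : 0 ≤ C := le_trans (abs_nonneg _) (h 0)
  have hL := key ((18 * C + 1) / (12 * k1))
  rw [show 12 * (k1 * ((18 * C + 1) / (12 * k1))) = 18 * C + 1 by
    field_simp] at hL
  have : |18 * C + 1| ≥ 18 * C + 1 := le_abs_self _
  linarith [le_abs_self (18 * C + 1)]

/-- A cubic polynomial bounded by `C * |t|^3` has vanishing linear coefficient. -/
lemma cubic_bounded_cubic (k0 k1 k2 k3 C : ℝ) (hC : 0 ≤ C)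
    (h : ∀ t : ℝ, |k0 + k1 * t + k2 * t ^ 2 + k3 * t ^ 3| ≤ C * |t| ^ 3) : k1 = 0 := by
  have key : ∀ L : ℝ, 0 ≤ L → |12 * (k1 * L)| ≤ 32 * C * L ^ 3 := by
    intro L hL
    have e1 : |L| = L := abs_of_nonneg hL
    have e2 : |(-L)| = L := by rw [abs_neg, e1]
    have e3 : |2 * L| = 2 * L := abs_of_nonneg (by linarith)
    have e4 : |(-(2 * L))| = 2 * L := by rw [abs_neg, e3]
    have h1 := abs_le.mp (h L); rw [e1] at h1
    have h2 := abs_le.mp (h (-L)); rw [e2] at h2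
    have h3 := abs_le.mp (h (2 * L)); rw [e3] at h3
    have h4 := abs_le.mp (h (-(2 * L))); rw [e4] at h4
    rw [abs_le]
    constructor <;> nlinarith [h1.1, h1.2, h2.1, h2.2, h3.1, h3.2, h4.1, h4.2]
  by_contra hk
  have hk' : 0 < |k1| := abs_pos.mpr hk
  set L : ℝ := Real.sqrt (|k1| / (8 * C + 1)) with hLdef
  have hLpos : 0 < L := Real.sqrt_pos.mpr (by positivity)
  have hL2 : L ^ 2 = |k1| / (8 * C + 1) := Real.sq_sqrt (by positivity)
  have hkey := key L (le_of_lt hLpos)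
  rw [abs_mul, abs_mul, abs_of_nonneg (by norm_num : (0:ℝ) ≤ 12),
    abs_of_nonneg (le_of_lt hLpos)] at hkey
  -- 12 |k1| L ≤ 32 C L^3 = 32 C L^2 * L
  have h32 : 32 * C * L ^ 3 = (32 * C * L ^ 2) * L := by ring
  have hCL2 : 32 * C * L ^ 2 < 12 * |k1| := by
    rw [hL2, show 32 * C * (|k1| / (8 * C + 1)) = 32 * C * |k1| / (8 * C + 1) by ring,
      div_lt_iff₀ (by positivity : (0:ℝ) < 8 * C + 1)]
    nlinarith [hk', hC, mul_nonneg hC (le_of_lt hk')]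
  nlinarith [hkey, hCL2, hLpos]


private lemma aux_cs (x P y A B B' C a b b' τ : ℝ)
    (hA : 0 < A) (ha : 0 < a) (ha2 : a ^ 2 = A) (hb2 : b ^ 2 = B) (hb : 0 ≤ b)
    (hb' : 0 < b') (hb'2 : b' ^ 2 = B')
    (hABC : A * B' = A * B - C ^ 2)
    (hx : P ^ 2 + x ^ 2 ≤ τ ^ 2 * (a ^ 3) ^ 2)
    (hτ : 0 ≤ τ)
    (hy : y = (b' / a) * x + (C / A) * P) :
    |y| ≤ τ * b * a ^ 2 := by
  have hy' : a * A * y = A * b' * x + a * C * P := by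
    rw [hy]; field_simp
  have key : (a * A * y) ^ 2 ≤ (τ * b * a ^ 2 * (a * A)) ^ 2 := by
    calc (a * A * y) ^ 2 = (A * b' * x + a * C * P) ^ 2 := by rw [hy']
      _ ≤ ((A * b') ^ 2 + (a * C) ^ 2) * (x ^ 2 + P ^ 2) := by
          nlinarith [sq_nonneg (A * b' * P - a * C * x)]
      _ = A * (A * B' + C ^ 2) * (P ^ 2 + x ^ 2) := by
          rw [← ha2, ← hb'2]; ring
      _ = A * (A * B) * (P ^ 2 + x ^ 2) := by rw [hABC]; ring
      _ ≤ A * (A * B) * (τ ^ 2 * (a ^ 3) ^ 2) := by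
          apply mul_le_mul_of_nonneg_left hx
          have hB : 0 ≤ B := by rw [← hb2]; positivity
          positivity
      _ = (τ * b * a ^ 2 * (a * A)) ^ 2 := by rw [← ha2, ← hb2]; ring
  have h1 : |a * A * y| ≤ |τ * b * a ^ 2 * (a * A)| := by
    have := Real.sqrt_le_sqrt (le_of_lt (lt_of_le_of_lt key (lt_add_one _)))
    -- use sqrt_sq_eq_abs instead
    rw [← Real.sqrt_sq_eq_abs, ← Real.sqrt_sq_eq_abs]
    exact Real.sqrt_le_sqrt key
  rw [abs_mul, abs_mul, abs_of_nonneg (le_of_lt ha), abs_of_nonneg (le_of_lt hA)] at h1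
  have hRHS : |τ * b * a ^ 2 * (a * A)| = τ * b * a ^ 2 * (a * A) := by
    apply abs_of_nonneg; positivity
  rw [hRHS] at h1
  have haA : 0 < a * A := mul_pos ha hA
  calc |y| = (a * A * |y|) / (a * A) := by field_simp
    _ ≤ (τ * b * a ^ 2 * (a * A)) / (a * A) := by
        apply (div_le_div_iff_of_pos_right haA).mpr
        linarith [h1]
    _ = τ * b * a ^ 2 := by field_simp

/-- Sharp bound for the polarized form: Banach-type step. -/
lemma banach_step {p : ℕ} (T : Fin p → Fin p → Fin p → ℝ)
    (hsym : ∀ i j k, T i j k = T j i k ∧ T i j k = T i k j)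
    (Γ : Matrix (Fin p) (Fin p) ℝ) (τ : ℝ) (hτ : 0 ≤ τ)
    (hT : ∀ w : Fin p → ℝ, |S3 T w w w| ≤ τ * euclNorm (Γ.mulVec w) ^ 3)
    (u v : Fin p → ℝ) :
    |S3 T u v v| ≤ τ * euclNorm (Γ.mulVec u) * euclNorm (Γ.mulVec v) ^ 2 := by
  obtain ⟨V, hVdef⟩ : ∃ x : Fin p → ℝ, x = Γ.mulVec v := ⟨_, rfl⟩
  obtain ⟨U, hUdef⟩ : ∃ x : Fin p → ℝ, x = Γ.mulVec u := ⟨_, rfl⟩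
  obtain ⟨A, hAdef⟩ : ∃ x : ℝ, x = ∑ i, V i ^ 2 := ⟨_, rfl⟩
  obtain ⟨B, hBdef⟩ : ∃ x : ℝ, x = ∑ i, U i ^ 2 := ⟨_, rfl⟩
  obtain ⟨C, hCdef⟩ : ∃ x : ℝ, x = ∑ i, V i * U i := ⟨_, rfl⟩
  have hA0 : 0 ≤ A := hAdef ▸ Finset.sum_nonneg fun i _ => sq_nonneg _
  have hB0 : 0 ≤ B := hBdef ▸ Finset.sum_nonneg fun i _ => sq_nonneg _
  obtain ⟨a, hadef⟩ : ∃ x : ℝ, x = Real.sqrt A := ⟨_, rfl⟩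
  obtain ⟨b, hbdef⟩ : ∃ x : ℝ, x = Real.sqrt B := ⟨_, rfl⟩
  have hea : euclNorm (Γ.mulVec v) = a := by
    rw [euclNorm, ← hVdef, ← hAdef, hadef]
  have heb : euclNorm (Γ.mulVec u) = b := by
    rw [euclNorm, ← hUdef, ← hBdef, hbdef]
  have ha2 : a ^ 2 = A := by rw [hadef]; exact Real.sq_sqrt hA0
  have hb2 : b ^ 2 = B := by rw [hbdef]; exact Real.sq_sqrt hB0
  have ha0 : 0 ≤ a := hadef ▸ Real.sqrt_nonneg _
  have hb0 : 0 ≤ b := hbdef ▸ Real.sqrt_nonneg _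
  have hCS : C ^ 2 ≤ A * B := by
    rw [hCdef, hAdef, hBdef]; exact Finset.sum_mul_sq_le_sq_mul_sq univ V U
  have habsC : |C| ≤ a * b := by
    rw [← Real.sqrt_sq_eq_abs]
    calc Real.sqrt (C ^ 2) ≤ Real.sqrt (A * B) := Real.sqrt_le_sqrt hCS
      _ = a * b := by rw [Real.sqrt_mul hA0, hadef, hbdef]
  rw [hea, heb]
  have hPv : |S3 T v v v| ≤ τ * a ^ 3 := by
    have := hT v; rw [hea] at this; exact this
  by_cases hAz : A = 0
  · -- degenerate case Γv = 0
    have hVi : ∀ i, V i = 0 := by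
      intro i
      have hsum : ∑ i, V i ^ 2 = 0 := by rw [← hAdef]; exact hAz
      have := (Finset.sum_eq_zero_iff_of_nonneg (fun i _ => sq_nonneg (V i))).mp hsum
      exact pow_eq_zero_iff (n := 2) (by norm_num) |>.mp (this i (Finset.mem_univ i))
    have hCz : C = 0 := by
      rw [hCdef]; apply Finset.sum_eq_zero; intro i _; rw [hVi i]; ring
    have hcub : ∀ t : ℝ, |S3 T v v v + (3 * S3 T u v v) * t + (3 * S3 T u u v) * t ^ 2
        + S3 T u u u * t ^ 3| ≤ (τ * b ^ 3) * |t| ^ 3 := by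
      intro t
      have hw := hT (fun i => 1 * v i + t * u i)
      rw [S3_cube_expand T hsym u v 1 t] at hw
      rw [show Γ.mulVec (fun i => 1 * v i + t * u i)
          = fun i => 1 * Γ.mulVec v i + t * Γ.mulVec u i from mulVec_two Γ 1 t v u] at hw
      rw [euclNorm, ← hVdef, ← hUdef] at hw
      rw [sumsq_two 1 t V U, ← hAdef, ← hBdef, ← hCdef, hAz, hCz] at hw
      rw [show (1:ℝ) ^ 2 * 0 + 2 * 1 * t * 0 + t ^ 2 * B = t ^ 2 * B by ring,
        Real.sqrt_mul (sq_nonneg t), Real.sqrt_sq_eq_abs, ← hbdef] at hw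
      calc |S3 T v v v + (3 * S3 T u v v) * t + (3 * S3 T u u v) * t ^ 2
            + S3 T u u u * t ^ 3|
          = |1 ^ 3 * S3 T v v v + 3 * 1 ^ 2 * t * S3 T u v v
            + 3 * 1 * t ^ 2 * S3 T u u v + t ^ 3 * S3 T u u u| := by ring_nf
        _ ≤ τ * (|t| * b) ^ 3 := hw
        _ = (τ * b ^ 3) * |t| ^ 3 := by ring
    have hk1 : 3 * S3 T u v v = 0 :=
      cubic_bounded_cubic _ _ _ _ _ (mul_nonneg hτ (pow_nonneg hb0 3)) hcub
    have hz' : S3 T u v v = 0 := by linarith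
    rw [hz', abs_zero]
    exact mul_nonneg (mul_nonneg hτ hb0) (sq_nonneg a)
  · have hApos : 0 < A := lt_of_le_of_ne hA0 (Ne.symm hAz)
    have hapos : 0 < a := by rw [hadef]; exact Real.sqrt_pos.mpr hApos
    obtain ⟨u', hu'def⟩ : ∃ x : Fin p → ℝ, x = fun i => -(C / A) * v i + 1 * u i := ⟨_, rfl⟩
    obtain ⟨U'f, hU'fdef⟩ : ∃ x : Fin p → ℝ, x = fun i => U i - C / A * V i := ⟨_, rfl⟩
    have hU' : Γ.mulVec u' = U'f := by
      rw [hu'def, mulVec_two Γ (-(C / A)) 1 v u, ← hVdef, ← hUdef, hU'fdef]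
      funext i; ring
    obtain ⟨B', hB'def⟩ : ∃ x : ℝ, x = ∑ i, U'f i ^ 2 := ⟨_, rfl⟩
    have hB'0 : 0 ≤ B' := hB'def ▸ Finset.sum_nonneg fun i _ => sq_nonneg _
    have hB'eq : B' = (B + (C / A) ^ 2 * A) - 2 * (C / A) * C := by
      rw [hB'def]
      have e : ∀ i : Fin p, U'f i ^ 2
          = (U i ^ 2 + (C / A) ^ 2 * V i ^ 2) - 2 * (C / A) * (V i * U i) := by
        intro i; rw [hU'fdef]; ring
      simp only [e, Finset.sum_sub_distrib, Finset.sum_add_distrib, ← Finset.mul_sum]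
      rw [← hAdef, ← hBdef, ← hCdef]
    have hABC : A * B' = A * B - C ^ 2 := by
      rw [hB'eq]; field_simp; ring
    have hC'z : ∑ i, V i * U'f i = 0 := by
      have e : ∀ i : Fin p, V i * U'f i = V i * U i - C / A * V i ^ 2 := by
        intro i; rw [hU'fdef]; ring
      simp only [e, Finset.sum_sub_distrib, ← Finset.mul_sum]
      rw [← hAdef, ← hCdef]; field_simp; ring
    have hS3u' : S3 T u' v v = -(C / A) * S3 T v v v + 1 * S3 T u v v := by
      rw [hu'def]; exact S3_first T (-(C / A)) 1 v u v v
    by_cases hB'z : B' = 0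
    · -- second degenerate case: Γ u' = 0
      have hcub : ∀ t : ℝ, |S3 T v v v + (3 * S3 T u' v v) * t + (3 * S3 T u' u' v) * t ^ 2
          + S3 T u' u' u' * t ^ 3| ≤ τ * a ^ 3 := by
        intro t
        have hw := hT (fun i => 1 * v i + t * u' i)
        rw [S3_cube_expand T hsym u' v 1 t] at hw
        rw [show Γ.mulVec (fun i => 1 * v i + t * u' i)
            = fun i => 1 * Γ.mulVec v i + t * Γ.mulVec u' i from mulVec_two Γ 1 t v u'] at hw
        rw [hU', euclNorm, ← hVdef] at hw
        rw [sumsq_two 1 t V U'f, ← hAdef, ← hB'def, hC'z, hB'z] at hw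
        rw [show (1:ℝ) ^ 2 * A + 2 * 1 * t * 0 + t ^ 2 * 0 = A by ring, ← hadef] at hw
        calc |S3 T v v v + (3 * S3 T u' v v) * t + (3 * S3 T u' u' v) * t ^ 2
              + S3 T u' u' u' * t ^ 3|
            = |1 ^ 3 * S3 T v v v + 3 * 1 ^ 2 * t * S3 T u' v v
              + 3 * 1 * t ^ 2 * S3 T u' u' v + t ^ 3 * S3 T u' u' u'| := by ring_nf
          _ ≤ τ * a ^ 3 := hw
      have hk1 : 3 * S3 T u' v v = 0 :=
        cubic_bounded_const _ _ _ _ _ hcub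
      have hS3z : S3 T u' v v = 0 := by linarith
      have hrel : S3 T u v v = C / A * S3 T v v v := by
        rw [hS3z] at hS3u'; linarith [hS3u']
      rw [hrel, abs_mul, abs_div, abs_of_pos hApos]
      calc |C| / A * |S3 T v v v| ≤ (a * b) / A * (τ * a ^ 3) := by
            apply mul_le_mul ((div_le_div_iff_of_pos_right hApos).mpr habsC) hPv
              (abs_nonneg _) (div_nonneg (mul_nonneg ha0 hb0) hA0)
        _ = τ * b * a ^ 2 := by
            rw [← ha2]; field_simp [ne_of_gt hapos]
    · have hB'pos : 0 < B' := lt_of_le_of_ne hB'0 (Ne.symm hB'z)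
      obtain ⟨b', hb'def⟩ : ∃ x : ℝ, x = Real.sqrt B' := ⟨_, rfl⟩
      have hb'pos : 0 < b' := by rw [hb'def]; exact Real.sqrt_pos.mpr hB'pos
      have hb'2 : b' ^ 2 = B' := by rw [hb'def]; exact Real.sq_sqrt hB'0
      obtain ⟨u'', hu''def⟩ : ∃ x : Fin p → ℝ, x = fun i => (a / b') * u' i + 0 * u' i :=
        ⟨_, rfl⟩
      have hU'' : Γ.mulVec u'' = fun i => (a / b') * U'f i := by
        rw [hu''def, mulVec_two Γ (a / b') 0 u' u', hU']
        funext i; ring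
      have hcore : 9 * (S3 T v v v) ^ 2 + (3 * S3 T u'' v v) ^ 2 ≤ 9 * (τ * a ^ 3) ^ 2 := by
        apply core_trig _ _ (3 * S3 T u'' u'' v) (S3 T u'' u'' u'')
        intro θ
        have hw := hT (fun i => Real.cos θ * v i + Real.sin θ * u'' i)
        rw [S3_cube_expand T hsym u'' v (Real.cos θ) (Real.sin θ)] at hw
        rw [show Γ.mulVec (fun i => Real.cos θ * v i + Real.sin θ * u'' i)
            = fun i => Real.cos θ * Γ.mulVec v i + Real.sin θ * Γ.mulVec u'' i
            from mulVec_two Γ (Real.cos θ) (Real.sin θ) v u''] at hw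
        rw [hU'', euclNorm, ← hVdef] at hw
        rw [sumsq_two (Real.cos θ) (Real.sin θ) V (fun i => (a / b') * U'f i)] at hw
        have eC : ∑ i, V i * ((a / b') * U'f i) = 0 := by
          have e : ∀ i : Fin p, V i * ((a / b') * U'f i) = (a / b') * (V i * U'f i) := by
            intro i; ring
          simp only [e, ← Finset.mul_sum]; rw [hC'z]; ring
        have eB : ∑ i, ((a / b') * U'f i) ^ 2 = A := by
          have e : ∀ i : Fin p, ((a / b') * U'f i) ^ 2 = (a / b') ^ 2 * U'f i ^ 2 := by
            intro i; ring
          simp only [e, ← Finset.mul_sum]; rw [← hB'def, ← hb'2, ← ha2]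
          field_simp [ne_of_gt hb'pos]
        rw [← hAdef, eC, eB] at hw
        rw [show Real.cos θ ^ 2 * A + 2 * Real.cos θ * Real.sin θ * 0 + Real.sin θ ^ 2 * A
            = A * (Real.sin θ ^ 2 + Real.cos θ ^ 2) by ring, Real.sin_sq_add_cos_sq,
          mul_one, ← hadef] at hw
        calc |S3 T v v v * Real.cos θ ^ 3 + 3 * S3 T u'' v v * Real.cos θ ^ 2 * Real.sin θ
              + 3 * S3 T u'' u'' v * Real.cos θ * Real.sin θ ^ 2
              + S3 T u'' u'' u'' * Real.sin θ ^ 3|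
            = |Real.cos θ ^ 3 * S3 T v v v
              + 3 * Real.cos θ ^ 2 * Real.sin θ * S3 T u'' v v
              + 3 * Real.cos θ * Real.sin θ ^ 2 * S3 T u'' u'' v
              + Real.sin θ ^ 3 * S3 T u'' u'' u''| := by ring_nf
          _ ≤ τ * a ^ 3 := hw
      have hx : (S3 T v v v) ^ 2 + (S3 T u'' v v) ^ 2 ≤ τ ^ 2 * (a ^ 3) ^ 2 := by
        nlinarith [hcore]
      have hS3u'' : S3 T u'' v v = (a / b') * S3 T u' v v := by
        rw [hu''def, S3_first T (a / b') 0 u' u' v v]; ring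
      have hy : S3 T u v v = (b' / a) * S3 T u'' v v + (C / A) * S3 T v v v := by
        rw [hS3u'']
        have hcan : (b' / a) * ((a / b') * S3 T u' v v) = S3 T u' v v := by
          field_simp
        rw [hcan]
        linarith [hS3u']
      exact aux_cs (S3 T u'' v v) (S3 T v v v) (S3 T u v v) A B B' C a b b' τ
        hApos hapos ha2 hb2 hb0 hb'pos hb'2 hABC hx hτ hy

section sumSwaps
variable {p : ℕ}

lemma sum3_rotate (f : Fin p → Fin p → Fin p → ℝ) :
    ∑ j, ∑ k, ∑ i, f i j k = ∑ i, ∑ j, ∑ k, f i j k := by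
  calc ∑ j, ∑ k, ∑ i, f i j k = ∑ j, ∑ i, ∑ k, f i j k :=
        Finset.sum_congr rfl fun j _ => Finset.sum_comm
    _ = ∑ i, ∑ j, ∑ k, f i j k := Finset.sum_comm

lemma sum4_swap (f : Fin p → Fin p → Fin p → Fin p → ℝ) :
    ∑ i, ∑ i', ∑ j, ∑ k, f i i' j k = ∑ j, ∑ k, ∑ i, ∑ i', f i i' j k := by
  calc ∑ i, ∑ i', ∑ j, ∑ k, f i i' j k
      = ∑ i, ∑ j, ∑ k, ∑ i', f i i' j k :=
        Finset.sum_congr rfl fun i _ => (sum3_rotate fun i' j k => f i i' j k).symm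
    _ = ∑ j, ∑ i, ∑ k, ∑ i', f i i' j k := Finset.sum_comm
    _ = ∑ j, ∑ k, ∑ i, ∑ i', f i i' j k :=
        Finset.sum_congr rfl fun j _ => Finset.sum_comm

lemma frob (X : Matrix (Fin p) (Fin p) ℝ) :
    ∑ j, ∑ k, X j k ^ 2 = Matrix.trace (Xᵀ * X) := by
  simp only [Matrix.trace, Matrix.diag, Matrix.mul_apply, Matrix.transpose_apply, sq]
  exact Finset.sum_comm

end sumSwaps

lemma lhs_eq {p : ℕ} (T : Fin p → Fin p → Fin p → ℝ) (u : Fin p → ℝ) :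
    u ⬝ᵥ ((Matrix.of fun i i' : Fin p =>
        2 * ((Matrix.of fun j k : Fin p => T i j k)ᵀ
              * Matrix.of fun j k : Fin p => T i' j k).trace).mulVec u)
      = 2 * ∑ j, ∑ k, (∑ i, u i * T i j k) ^ 2 := by
  have htr : ∀ i i' : Fin p,
      ((Matrix.of fun j k : Fin p => T i j k)ᵀ * Matrix.of fun j k : Fin p => T i' j k).trace
        = ∑ j, ∑ k, T i j k * T i' j k := by
    intro i i'
    simp only [Matrix.trace, Matrix.diag, Matrix.mul_apply, Matrix.transpose_apply,
      Matrix.of_apply]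
    exact Finset.sum_comm
  calc u ⬝ᵥ ((Matrix.of fun i i' : Fin p =>
        2 * ((Matrix.of fun j k : Fin p => T i j k)ᵀ
              * Matrix.of fun j k : Fin p => T i' j k).trace).mulVec u)
      = ∑ i, ∑ i', u i * (2 * (∑ j, ∑ k, T i j k * T i' j k) * u i') := by
        simp only [dotProduct, Matrix.mulVec, Matrix.of_apply]
        refine Finset.sum_congr rfl fun i _ => ?_
        rw [Finset.mul_sum]
        refine Finset.sum_congr rfl fun i' _ => ?_
        rw [htr i i']
    _ = ∑ i, ∑ i', ∑ j, ∑ k, 2 * ((u i * T i j k) * (u i' * T i' j k)) := by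
        refine Finset.sum_congr rfl fun i _ => Finset.sum_congr rfl fun i' _ => ?_
        rw [show u i * (2 * (∑ j, ∑ k, T i j k * T i' j k) * u i')
            = 2 * ((∑ j, ∑ k, T i j k * T i' j k) * (u i * u i')) from by ring,
          Finset.sum_mul, Finset.mul_sum]
        refine Finset.sum_congr rfl fun j _ => ?_
        rw [Finset.sum_mul, Finset.mul_sum]
        refine Finset.sum_congr rfl fun k _ => by ring
    _ = ∑ j, ∑ k, ∑ i, ∑ i', 2 * ((u i * T i j k) * (u i' * T i' j k)) :=
        sum4_swap _
    _ = 2 * ∑ j, ∑ k, (∑ i, u i * T i j k) ^ 2 := by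
        rw [Finset.mul_sum]
        refine Finset.sum_congr rfl fun j _ => ?_
        rw [Finset.mul_sum]
        refine Finset.sum_congr rfl fun k _ => ?_
        rw [sq, Finset.sum_mul_sum, Finset.mul_sum]
        refine Finset.sum_congr rfl fun i _ => ?_
        rw [Finset.mul_sum]


/-- If the symmetric 3-tensor `T` satisfies condition (Γ), then the matrix
`S²` with entries `(S²)_{i,i'} = 2⟨T_i, T_{i'}⟩` (Frobenius inner product) satisfies
`uᵀ S² u ≤ 2τ² tr(Γ⁴) ‖Γu‖²` for all `u ∈ ℝ^p`. -/
theorem S_sq_quadratic_form_bound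
    (p : ℕ) (T : Fin p → Fin p → Fin p → ℝ)
    (hsym : ∀ i j k, T i j k = T j i k ∧ T i j k = T i k j)
    (Γ : Matrix (Fin p) (Fin p) ℝ) (hΓ : Γ.IsSymm) (τ : ℝ) (hτ : 0 < τ)
    (hT : ∀ u : Fin p → ℝ,
      |∑ i, ∑ j, ∑ k, T i j k * u i * u j * u k| ≤ τ * euclNorm (Γ.mulVec u) ^ 3) :
    ∀ u : Fin p → ℝ,
      u ⬝ᵥ ((Matrix.of fun i i' : Fin p =>
          2 * ((Matrix.of fun j k : Fin p => T i j k)ᵀ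
                * Matrix.of fun j k : Fin p => T i' j k).trace).mulVec u)
        ≤ 2 * τ ^ 2 * (Γ ^ 4).trace * euclNorm (Γ.mulVec u) ^ 2 := by
  have hT' : ∀ w : Fin p → ℝ, |S3 T w w w| ≤ τ * euclNorm (Γ.mulVec w) ^ 3 := hT
  intro u
  rw [lhs_eq T u]
  set M : Matrix (Fin p) (Fin p) ℝ := Matrix.of fun j k : Fin p => ∑ i, u i * T i j k with hMdef
  have hMapp : ∀ j k, M j k = ∑ i, u i * T i j k := fun j k => rfl
  have hMt : Mᵀ = M := by
    ext j k
    rw [Matrix.transpose_apply, hMapp, hMapp]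
    exact Finset.sum_congr rfl fun i _ => by rw [(hsym i k j).2]
  have hM : M.IsHermitian := by
    show Mᴴ = M
    rw [Matrix.conjTranspose_eq_transpose_of_trivial, hMt]
  set Umat : Matrix (Fin p) (Fin p) ℝ := (hM.eigenvectorUnitary : Matrix (Fin p) (Fin p) ℝ)
    with hUmatdef
  have hsU : star Umat = Umatᵀ := by
    rw [Matrix.star_eq_conjTranspose, Matrix.conjTranspose_eq_transpose_of_trivial]
  have hUU : star Umat * Umat = 1 := Matrix.mem_unitaryGroup_iff'.mp hM.eigenvectorUnitary.2
  have hUU' : Umat * star Umat = 1 := Matrix.mem_unitaryGroup_iff.mp hM.eigenvectorUnitary.2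
  set lam : Fin p → ℝ := hM.eigenvalues with hlamdef
  set va : Fin p → Fin p → ℝ := fun a i => hM.eigenvectorBasis a i with hvadef
  have hnorm : ∀ a, ∑ i, va a i ^ 2 = 1 := by
    intro a
    have h1 : ‖hM.eigenvectorBasis a‖ = 1 := hM.eigenvectorBasis.orthonormal.1 a
    rw [EuclideanSpace.norm_eq] at h1
    rw [← Real.sqrt_eq_one]
    convert h1 using 2
    refine Finset.sum_congr rfl fun i _ => ?_
    rw [Real.norm_eq_abs, sq_abs]
  have hMva : ∀ a, M.mulVec (va a) = lam a • va a := fun a => hM.mulVec_eigenvectorBasis a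
  -- eigenvalues as values of the trilinear form
  have hlam : ∀ a, lam a = S3 T u (va a) (va a) := by
    intro a
    have h1 : ∑ j, va a j * M.mulVec (va a) j = lam a := by
      rw [hMva a]
      have e : ∑ j, va a j * (lam a • va a) j = lam a * ∑ j, va a j ^ 2 := by
        rw [Finset.mul_sum]
        exact Finset.sum_congr rfl fun j _ => by
          simp only [Pi.smul_apply, smul_eq_mul]; ring
      rw [e, hnorm a, mul_one]
    have h2 : ∑ j, va a j * M.mulVec (va a) j = S3 T u (va a) (va a) := by
      unfold S3
      rw [← sum3_rotate]
      refine Finset.sum_congr rfl fun j _ => ?_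
      rw [show M.mulVec (va a) j = ∑ k, M j k * va a k from rfl, Finset.mul_sum]
      refine Finset.sum_congr rfl fun k _ => ?_
      rw [hMapp, Finset.sum_mul, Finset.mul_sum]
      exact Finset.sum_congr rfl fun i _ => by ring
    rw [← h1, h2]
  -- Frobenius norm equals sum of squared eigenvalues
  have key_a : ∑ j, ∑ k, M j k ^ 2 = ∑ a, lam a ^ 2 := by
    have hD : star Umat * M * Umat = Matrix.diagonal (RCLike.ofReal ∘ lam) := by
      have := hM.conjStarAlgAut_star_eigenvectorUnitary
      rwa [Unitary.conjStarAlgAut_star_apply] at this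
    have hMM : (star Umat * M * Umat) * (star Umat * M * Umat) = star Umat * (M * M) * Umat := by
      calc (star Umat * M * Umat) * (star Umat * M * Umat)
          = star Umat * (M * ((Umat * star Umat) * (M * Umat))) := by
            simp only [Matrix.mul_assoc]
        _ = star Umat * (M * (M * Umat)) := by rw [hUU', Matrix.one_mul]
        _ = star Umat * (M * M) * Umat := by simp only [Matrix.mul_assoc]
    have htr1 : Matrix.trace (star Umat * (M * M) * Umat) = Matrix.trace (M * M) := by
      rw [Matrix.trace_mul_cycle, ← Matrix.mul_assoc, hUU', Matrix.one_mul]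
    calc ∑ j, ∑ k, M j k ^ 2 = Matrix.trace (Mᵀ * M) := frob M
      _ = Matrix.trace (M * M) := by rw [hMt]
      _ = Matrix.trace ((star Umat * M * Umat) * (star Umat * M * Umat)) := by
          rw [hMM, htr1]
      _ = Matrix.trace ((Matrix.diagonal (RCLike.ofReal ∘ lam))
            * (Matrix.diagonal (RCLike.ofReal ∘ lam))) := by rw [hD]
      _ = ∑ a, lam a ^ 2 := by
          rw [Matrix.diagonal_mul_diagonal, Matrix.trace_diagonal]
          exact Finset.sum_congr rfl fun a _ => by
            simp [RCLike.ofReal_real_eq_id, sq]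
  -- the matrix N = Γ², its symmetry
  set N : Matrix (Fin p) (Fin p) ℝ := Γ * Γ with hNdef
  have hNt : Nᵀ = N := by
    rw [hNdef, Matrix.transpose_mul, hΓ.eq]
  -- per-eigenvector quantities
  have hb0 : 0 ≤ euclNorm (Γ.mulVec u) := Real.sqrt_nonneg _
  set b : ℝ := euclNorm (Γ.mulVec u) with hbdef
  -- per-eigenvector: λ a ^ 2 ≤ τ^2 b^2 * ∑_j ((N *ᵥ va a) j)^2
  have per_a : ∀ a, lam a ^ 2 ≤ τ ^ 2 * b ^ 2 * ∑ j, (N.mulVec (va a) j) ^ 2 := by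
    intro a
    have hbs := banach_step T hsym Γ τ (le_of_lt hτ) hT' u (va a)
    rw [← hbdef] at hbs
    -- euclNorm (Γ *ᵥ va a) ^ 2 = ∑ i (Γ *ᵥ va a) i ^ 2
    set w : Fin p → ℝ := Γ.mulVec (va a) with hwdef
    have hsumnn : 0 ≤ ∑ i, w i ^ 2 := Finset.sum_nonneg fun i _ => sq_nonneg _
    have hen2 : euclNorm (Γ.mulVec (va a)) ^ 2 = ∑ i, w i ^ 2 := by
      rw [← hwdef, euclNorm]
      exact Real.sq_sqrt hsumnn
    -- symmetric step: ∑ i w i ^2 = ∑ j va a j * (N *ᵥ va a) j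
    have hsym_step : ∑ i, w i ^ 2 = ∑ j, va a j * N.mulVec (va a) j := by
      calc ∑ i, w i ^ 2 = ∑ i, ∑ j, w i * Γ i j * va a j := by
            refine Finset.sum_congr rfl fun i _ => ?_
            rw [sq, show w i = ∑ j, Γ i j * va a j from rfl, Finset.mul_sum]
            exact Finset.sum_congr rfl fun j _ => by ring
        _ = ∑ j, ∑ i, w i * Γ i j * va a j := Finset.sum_comm
        _ = ∑ j, va a j * ∑ i, Γ j i * w i := by
            refine Finset.sum_congr rfl fun j _ => ?_
            rw [Finset.mul_sum]
            refine Finset.sum_congr rfl fun i _ => ?_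
            rw [hΓ.apply i j]
            ring
        _ = ∑ j, va a j * N.mulVec (va a) j := by
            refine Finset.sum_congr rfl fun j _ => ?_
            rw [show (∑ i, Γ j i * w i) = Γ.mulVec w j from rfl, hwdef,
              Matrix.mulVec_mulVec, ← hNdef]
    -- Cauchy–Schwarz
    have hCS : (∑ j, va a j * N.mulVec (va a) j) ^ 2 ≤ ∑ j, (N.mulVec (va a) j) ^ 2 := by
      calc (∑ j, va a j * N.mulVec (va a) j) ^ 2
          ≤ (∑ j, va a j ^ 2) * ∑ j, (N.mulVec (va a) j) ^ 2 :=
            Finset.sum_mul_sq_le_sq_mul_sq univ _ _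
        _ = ∑ j, (N.mulVec (va a) j) ^ 2 := by rw [hnorm a, one_mul]
    have h4 : (euclNorm (Γ.mulVec (va a)) ^ 2) ^ 2 ≤ ∑ j, (N.mulVec (va a) j) ^ 2 := by
      rw [hen2, hsym_step]; exact hCS
    -- combine with the Banach step
    have hlam_abs : |lam a| ≤ τ * b * euclNorm (Γ.mulVec (va a)) ^ 2 := by
      rw [hlam a]
      calc |S3 T u (va a) (va a)| ≤ τ * euclNorm (Γ.mulVec u) * euclNorm (Γ.mulVec (va a)) ^ 2 :=
            hbs
        _ = τ * b * euclNorm (Γ.mulVec (va a)) ^ 2 := by rw [← hbdef]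
    have h5 : lam a ^ 2 ≤ (τ * b) ^ 2 * (euclNorm (Γ.mulVec (va a)) ^ 2) ^ 2 := by
      have h6 : lam a ^ 2 = |lam a| ^ 2 := (sq_abs _).symm
      rw [h6]
      have h7 : 0 ≤ |lam a| := abs_nonneg _
      nlinarith [hlam_abs, h7, sq_nonneg (euclNorm (Γ.mulVec (va a)))]
    calc lam a ^ 2 ≤ (τ * b) ^ 2 * (euclNorm (Γ.mulVec (va a)) ^ 2) ^ 2 := h5
      _ ≤ (τ * b) ^ 2 * ∑ j, (N.mulVec (va a) j) ^ 2 :=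
          mul_le_mul_of_nonneg_left h4 (sq_nonneg _)
      _ = τ ^ 2 * b ^ 2 * ∑ j, (N.mulVec (va a) j) ^ 2 := by ring
  -- sum over a of ∑_j ((N *ᵥ va a) j)^2 equals trace (Γ^4)
  have htrace : ∑ a, ∑ j, (N.mulVec (va a) j) ^ 2 = (Γ ^ 4).trace := by
    have hcol : ∀ a j, N.mulVec (va a) j = (N * Umat) j a := by
      intro a j
      rw [Matrix.mul_apply]
      rfl
    have h1 : ∑ a, ∑ j, (N.mulVec (va a) j) ^ 2 = ∑ j, ∑ a, ((N * Umat) j a) ^ 2 := by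
      have h0 : ∑ a, ∑ j, (N.mulVec (va a) j) ^ 2 = ∑ a, ∑ j, ((N * Umat) j a) ^ 2 :=
        Finset.sum_congr rfl fun a _ => Finset.sum_congr rfl fun j _ => by rw [hcol]
      rw [h0]
      exact Finset.sum_comm
    rw [h1, frob (N * Umat)]
    rw [Matrix.transpose_mul]
    calc Matrix.trace (Umatᵀ * Nᵀ * (N * Umat))
        = Matrix.trace (Umatᵀ * (Nᵀ * (N * Umat))) := by rw [Matrix.mul_assoc]
      _ = Matrix.trace (Nᵀ * (N * Umat) * Umatᵀ) := Matrix.trace_mul_comm _ _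
      _ = Matrix.trace (Nᵀ * N * (Umat * Umatᵀ)) := by simp only [Matrix.mul_assoc]
      _ = Matrix.trace (Nᵀ * N) := by rw [← hsU, hUU', Matrix.mul_one]
      _ = (Γ ^ 4).trace := by
          rw [hNt, hNdef, show Γ ^ 4 = Γ * Γ * (Γ * Γ) from by
            rw [show (4 : ℕ) = 2 + 2 from rfl, pow_add, sq]]
  -- final combination
  calc 2 * ∑ j, ∑ k, (∑ i, u i * T i j k) ^ 2
      = 2 * ∑ a, lam a ^ 2 := by
        rw [show (∑ j, ∑ k, (∑ i, u i * T i j k) ^ 2) = ∑ j, ∑ k, M j k ^ 2 from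
          Finset.sum_congr rfl fun j _ => Finset.sum_congr rfl fun k _ => by rw [hMapp],
          key_a]
    _ ≤ 2 * ∑ a, τ ^ 2 * b ^ 2 * ∑ j, (N.mulVec (va a) j) ^ 2 := by
        have := Finset.sum_le_sum (fun a (_ : a ∈ Finset.univ) => per_a a)
        linarith
    _ = 2 * (τ ^ 2 * b ^ 2 * ∑ a, ∑ j, (N.mulVec (va a) j) ^ 2) := by
        rw [← Finset.mul_sum]
    _ = 2 * τ ^ 2 * (Γ ^ 4).trace * b ^ 2 := by rw [htrace]; ring
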